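/- If a word p of length n over the positive integers has no immediate repetitions (no index i with p(i) = p(i+1)), then either p or the word p^{+1} obtained by adding 1 to every letter of p occurs as a subsequence of the first n runs of the infinite zigzag word. -/

import Mathlib

/-- Ascending run of odd letters `1,3,5,...` restricted to letters `≤ B`. -/
def ascRun (B : Nat) : List Nat := (List.range (B + 1)).filter (fun x => x % 2 == 1)

/-- Descending run of even letters `...,6,4,2` restricted to letters `≤ B`. -/
def descRun (B : Nat) : List Nat :=
  ((List.range (B + 1)).filter (fun x => x % 2 == 0 && x != 0)).reverse

/-- The first `n` runs of the infinite zigzag word, restricted to letters `≤ B`. -/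
def zigzag (B n : Nat) : List Nat :=
  (List.range n).flatMap (fun k => if k % 2 = 0 then ascRun B else descRun B)

namespace ZZaux

/-- The `k`-th run. -/
def run (B k : Nat) : List Nat := if k % 2 = 0 then ascRun B else descRun B

lemma zigzag_succ (B n : Nat) : zigzag B (n + 1) = zigzag B n ++ run B n := by
  simp [zigzag, List.range_succ, run]

lemma zigzag_prefix (B : Nat) : ∀ {m n : Nat}, m ≤ n → (zigzag B m).Sublist (zigzag B n) := by
  intro m n h
  induction n with
  | zero => interval_cases m; exact List.Sublist.refl _
  | succ n ih =>
    rcases Nat.lt_or_ge m (n + 1) with h' | h'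
    · exact (ih (Nat.lt_succ_iff.mp h')).trans
        (by rw [zigzag_succ]; exact List.sublist_append_left _ _)
    · have : m = n + 1 := le_antisymm h h'
      subst this; exact List.Sublist.refl _

lemma mem_run {B k x : Nat} : x ∈ run B k ↔ x ≤ B ∧ 0 < x ∧ x % 2 = (k + 1) % 2 := by
  by_cases hk : k % 2 = 0 <;>
    simp [run, ascRun, descRun, hk, List.mem_filter, List.mem_range] <;> omega

/-- `upto k y z` : in run of shape `k`, position of `z` is at or before position of `y`. -/
def upto (k y z : Nat) : Bool := if k % 2 = 0 then z ≤ y else y ≤ z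

lemma upto_self (k y : Nat) : upto k y y = true := by simp [upto]

/-- The run is appropriately sorted with respect to the `upto` predicate. -/
lemma run_pairwise_upto (B k y : Nat) :
    (run B k).Pairwise (fun a b => upto k y b = true → upto k y a = true) := by
  by_cases hk : k % 2 = 0
  · have h1 : (run B k).Pairwise (· < ·) := by
      rw [run, if_pos hk]
      exact List.Pairwise.sublist (List.filter_sublist) (List.pairwise_lt_range)
    exact h1.imp (by intro a b hab; simp [upto, hk]; omega)
  · have h1 : (run B k).Pairwise (· > ·) := by
      rw [run, if_neg hk]
      exact List.pairwise_reverse.mpr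
        (List.Pairwise.sublist (List.filter_sublist) (List.pairwise_lt_range))
    exact h1.imp (by intro a b hab; simp [upto, hk]; omega)

/-- Splitting a suitably sorted list by a filter. -/
lemma filter_split {l : List Nat} {P : Nat → Bool}
    (h : l.Pairwise (fun a b => P b = true → P a = true)) :
    l = l.filter P ++ l.filter (fun z => !P z) := by
  induction l with
  | nil => simp
  | cons a l ih =>
    rw [List.pairwise_cons] at h
    by_cases ha : P a = true
    · simp only [List.filter_cons, ha, if_pos, Bool.not_true, if_neg]
      simp [ha, ← ih h.2]
    · have hall : ∀ b ∈ l, ¬ P b = true := fun b hb hPb => ha (h.1 b hb hPb)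
      have h1 : List.filter P (a :: l) = [] := by
        rw [List.filter_eq_nil_iff]; intro b hb
        rcases List.mem_cons.mp hb with rfl | hb
        · exact ha
        · exact hall b hb
      have h2 : List.filter (fun z => !P z) (a :: l) = a :: l := by
        rw [List.filter_eq_self]; intro b hb
        rcases List.mem_cons.mp hb with rfl | hb
        · simp [ha]
        · simp [hall b hb]
      rw [h1, h2, List.nil_append]

/-- `q` embeds in the first `k+1` runs with its last letter placed at letter `y`
of run `k` (all the rest of run `k` still free). -/
def Emb (B : Nat) (q : List Nat) (k y : Nat) : Prop :=
  q.Sublist (zigzag B k ++ (run B k).filter (upto k y))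

/-- Number of extra runs needed to append letter `x` after letter `y`. -/
def cost (x y : Nat) : Nat :=
  if x % 2 ≠ y % 2 then 1
  else if (y % 2 = 1 ∧ y < x) ∨ (y % 2 = 0 ∧ x < y) then 0 else 2

lemma cost_add {x y : Nat} (h : x ≠ y) : cost x y + cost (x + 1) (y + 1) = 2 := by
  unfold cost; split_ifs <;> omega

lemma emb_mono {B q k y j} (hq : Emb B q k y) (hkj : k + 1 ≤ j) :
    q.Sublist (zigzag B j) := by
  refine hq.trans (((List.Sublist.refl _).append (List.filter_sublist)).trans ?_)
  rw [← zigzag_succ]; exact zigzag_prefix B hkj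

lemma emb_new_run {B q k y x j} (hq : Emb B q k y) (hkj : k + 1 ≤ j)
    (hx : x ∈ run B j) : Emb B (q ++ [x]) j x := by
  refine List.Sublist.append (emb_mono hq hkj) ?_
  exact List.singleton_sublist.mpr (List.mem_filter.mpr ⟨hx, upto_self _ _⟩)

lemma step {B : Nat} {q : List Nat} {k y x : Nat}
    (hq : Emb B q k y) (hpar : y % 2 = (k + 1) % 2)
    (hx0 : 0 < x) (hxB : x ≤ B) (hxy : x ≠ y) :
    Emb B (q ++ [x]) (k + cost x y) x ∧ x % 2 = ((k + cost x y) + 1) % 2 := by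
  by_cases hpxy : x % 2 = y % 2
  · by_cases hord : (y % 2 = 1 ∧ y < x) ∨ (y % 2 = 0 ∧ x < y)
    · -- stay in the same run
      have hc : cost x y = 0 := by unfold cost; split_ifs <;> omega
      rw [hc, Nat.add_zero]
      refine ⟨?_, by omega⟩
      set l' := (run B k).filter (upto k x) with hl'
      have hpair : l'.Pairwise (fun a b => upto k y b = true → upto k y a = true) :=
        List.Pairwise.sublist (List.filter_sublist) (run_pairwise_upto B k y)
      have h1 : l' = l'.filter (upto k y) ++ l'.filter (fun z => !upto k y z) :=
        filter_split hpair
      have hmono : ∀ z ∈ run B k, (upto k y z && upto k x z) = upto k y z := by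
        intro z _
        by_cases hzy : upto k y z = true
        · have : upto k x z = true := by
            by_cases hk : k % 2 = 0 <;> simp [upto, hk] at hzy ⊢ <;> omega
          simp [hzy, this]
        · simp [Bool.eq_false_iff.mpr hzy]
      have h2 : l'.filter (upto k y) = (run B k).filter (upto k y) := by
        rw [hl', List.filter_filter]
        exact List.filter_congr hmono
      have hxmem : x ∈ l'.filter (fun z => !upto k y z) := by
        refine List.mem_filter.mpr ⟨List.mem_filter.mpr ⟨?_, upto_self _ _⟩, ?_⟩
        · exact mem_run.mpr ⟨hxB, hx0, by omega⟩
        · have : upto k y x = false := by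
            by_cases hk : k % 2 = 0 <;> simp [upto, hk] <;> omega
          simp [this]
      show (q ++ [x]).Sublist (zigzag B k ++ l')
      rw [h1, ← List.append_assoc]
      refine List.Sublist.append ?_ (List.singleton_sublist.mpr hxmem)
      rw [h2]; exact hq
    · -- same parity, wrong order: skip to run k+2
      have hc : cost x y = 2 := by unfold cost; split_ifs <;> omega
      rw [hc]
      refine ⟨emb_new_run (j := k + 2) hq (by omega) (mem_run.mpr ⟨hxB, hx0, by omega⟩), by omega⟩
  · -- different parity: next run
    have hc : cost x y = 1 := by unfold cost; split_ifs <;> omega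
    rw [hc]
    refine ⟨emb_new_run (j := k + 1) hq (by omega) (mem_run.mpr ⟨hxB, hx0, by omega⟩), by omega⟩

/-- Main simultaneous induction: extend embeddings of `q` and `q.map (·+1)`
letter by letter along `p`. -/
lemma main (B : Nat) (p : List Nat) : ∀ (q : List Nat) (y k k' : Nat),
    (∀ x ∈ p, 0 < x ∧ x + 1 ≤ B) → List.Chain' (· ≠ ·) (y :: p) →
    y % 2 = (k + 1) % 2 → (y + 1) % 2 = (k' + 1) % 2 →
    Emb B q k y → Emb B (q.map (· + 1)) k' (y + 1) →
    ∃ m m' z z', m + m' = k + k' + 2 * p.length ∧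
      Emb B (q ++ p) m z ∧ Emb B ((q ++ p).map (· + 1)) m' z' := by
  induction p with
  | nil =>
    intro q y k k' _ _ _ _ hq hq'
    exact ⟨k, k', y, y + 1, by simp, by simpa using hq, by simpa using hq'⟩
  | cons x p ih =>
    intro q y k k' hall hch hpar hpar' hq hq'
    obtain ⟨hyx, hch'⟩ := List.isChain_cons_cons.mp hch
    obtain ⟨hx0, hxB⟩ := hall x (List.mem_cons_self)
    obtain ⟨hs1, hp1⟩ := step hq hpar hx0 (by omega) (Ne.symm hyx)
    obtain ⟨hs2, hp2⟩ := step hq' hpar' (by omega) hxB (by omega)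
    have hmapeq : q.map (· + 1) ++ [x + 1] = (q ++ [x]).map (· + 1) := by simp
    rw [hmapeq] at hs2
    obtain ⟨m, m', z, z', hsum, h1, h2⟩ :=
      ih (q ++ [x]) x (k + cost x y) (k' + cost (x + 1) (y + 1))
        (fun a ha => hall a (List.mem_cons_of_mem _ ha)) hch' hp1 hp2 hs1 hs2
    refine ⟨m, m', z, z', ?_, ?_, ?_⟩
    · rw [hsum]
      have := cost_add (Ne.symm hyx)
      simp [List.length_cons]; omega
    · simpa [List.append_assoc] using h1
    · simpa [List.append_assoc] using h2

end ZZaux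

/-- If a word of length n over the positive integers has no immediate repetition, then
either it or its increment occurs as a subsequence of the first n runs of the infinite
zigzag word (equivalently, of a restriction of them to a large enough finite alphabet). -/
theorem zigzag_embeds_words_without_repetitions (n : Nat) (p : List Nat)
    (hlen : p.length = n) (hpos : ∀ x ∈ p, 0 < x)
    (hnorep : List.Chain' (· ≠ ·) p) :
    (∃ B, List.Sublist p (zigzag B n)) ∨
      (∃ B, List.Sublist (p.map (· + 1)) (zigzag B n)) := by
  open ZZaux in
  cases p with
  | nil => exact Or.inl ⟨0, List.nil_sublist _⟩
  | cons x rest =>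
    set B : Nat := (x :: rest).sum + 1 with hB
    have hall : ∀ z ∈ x :: rest, 0 < z ∧ z + 1 ≤ B := by
      intro z hz
      refine ⟨hpos z hz, ?_⟩
      have := List.single_le_sum (l := x :: rest) (fun a _ => Nat.zero_le a) z hz
      omega
    obtain ⟨hx0, hxB⟩ := hall x (List.mem_cons_self)
    -- base state for the first letter
    have hbase : ∃ k k', k + k' = 1 ∧ x % 2 = (k + 1) % 2 ∧ (x + 1) % 2 = (k' + 1) % 2 ∧
        ZZaux.Emb B [x] k x ∧ ZZaux.Emb B [x + 1] k' (x + 1) := by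
      by_cases hx2 : x % 2 = 1
      · refine ⟨0, 1, rfl, by omega, by omega, ?_, ?_⟩
        · show List.Sublist ([] ++ [x]) _
          refine List.Sublist.append (by simp [zigzag] : List.Sublist [] (zigzag B 0)) ?_
          exact List.singleton_sublist.mpr (List.mem_filter.mpr
            ⟨ZZaux.mem_run.mpr ⟨by omega, hx0, by omega⟩, ZZaux.upto_self _ _⟩)
        · show List.Sublist ([] ++ [x + 1]) _
          refine List.Sublist.append (List.nil_sublist _) ?_
          exact List.singleton_sublist.mpr (List.mem_filter.mpr
            ⟨ZZaux.mem_run.mpr ⟨by omega, by omega, by omega⟩, ZZaux.upto_self _ _⟩)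
      · refine ⟨1, 0, rfl, by omega, by omega, ?_, ?_⟩
        · show List.Sublist ([] ++ [x]) _
          refine List.Sublist.append (List.nil_sublist _) ?_
          exact List.singleton_sublist.mpr (List.mem_filter.mpr
            ⟨ZZaux.mem_run.mpr ⟨by omega, hx0, by omega⟩, ZZaux.upto_self _ _⟩)
        · show List.Sublist ([] ++ [x + 1]) _
          refine List.Sublist.append (by simp [zigzag] : List.Sublist [] (zigzag B 0)) ?_
          exact List.singleton_sublist.mpr (List.mem_filter.mpr
            ⟨ZZaux.mem_run.mpr ⟨by omega, by omega, by omega⟩, ZZaux.upto_self _ _⟩)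
    obtain ⟨k, k', hkk, hp1, hp2, he1, he2⟩ := hbase
    have he2' : ZZaux.Emb B ([x].map (· + 1)) k' (x + 1) := by simpa using he2
    obtain ⟨m, m', z, z', hsum, h1, h2⟩ :=
      ZZaux.main B rest [x] x k k'
        (fun a ha => hall a (List.mem_cons_of_mem _ ha)) hnorep hp1 hp2 he1 he2'
    have hn : n = rest.length + 1 := by simp at hlen; omega
    have hcons : ([x] ++ rest) = x :: rest := rfl
    rcases le_total m m' with hm | hm
    · left
      refine ⟨B, ?_⟩
      rw [← hcons]
      exact ZZaux.emb_mono h1 (by omega)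
    · right
      refine ⟨B, ?_⟩
      have : (x :: rest).map (· + 1) = ([x] ++ rest).map (· + 1) := rfl
      rw [this]
      exact ZZaux.emb_mono h2 (by omega)
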